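/- Let K ⊂ ℂ be compact, μ a compactly supported probability measure on ℂ not supported on a circle centered in K, and X a random variable with law μ. Then there exist ε₀, p₀ ∈ (0, 1/4) such that the Lévy concentration function of the real random variable log |X − z| satisfies L(log|X − z|, ε₀) := sup_{u ∈ ℝ} ℙ(|log|X − z| − u| ≤ ε₀) ≤ 1 − p₀, uniformly over all z ∈ K that are not atoms of μ. -/

import Mathlib

open MeasureTheory Filter Topology

/-- If the compactly supported probability measure `μ` on `ℂ` is not supported on any
circle centered at a point of the compact set `K`, then there exist `ε₀, p₀ ∈ (0, 1/4)`
such that the Lévy concentration function of `log |X − z|` satisfies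
`L(log|X − z|, ε₀) ≤ 1 − p₀` uniformly over `z ∈ K` not an atom of `μ`. -/
theorem levy_concentration_log_dist (K : Set ℂ) (hK : IsCompact K)
    (μ : Measure ℂ) [IsProbabilityMeasure μ]
    (hcs : ∃ S : Set ℂ, IsCompact S ∧ μ Sᶜ = 0)
    (hnc : ∀ z ∈ K, ∀ r : ℝ, 0 ≤ r → μ {w : ℂ | ‖w - z‖ = r} ≠ 1) :
    ∃ ε₀ p₀ : ℝ, ε₀ ∈ Set.Ioo (0 : ℝ) (1 / 4) ∧ p₀ ∈ Set.Ioo (0 : ℝ) (1 / 4) ∧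
      ∀ z ∈ K, μ {z} = 0 →
        ∀ u : ℝ,
          μ {w : ℂ | |Real.log (‖w - z‖) - u| ≤ ε₀} ≤
            ENNReal.ofReal (1 - p₀) := by
  by_contra hcon
  push_neg at hcon
  obtain ⟨S, hScomp, hSnull⟩ := hcs
  obtain ⟨M₁, hM₁⟩ := isBounded_iff_forall_norm_le.mp hScomp.isBounded
  obtain ⟨M₂, hM₂⟩ := isBounded_iff_forall_norm_le.mp hK.isBounded
  set M : ℝ := |M₁| + |M₂| + 1 with hMdef
  have hM1 : 1 ≤ M := by
    have := abs_nonneg M₁; have := abs_nonneg M₂; simp only [hMdef]; linarith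
  have hεmem : ∀ n : ℕ, (1 : ℝ)/(n+5) ∈ Set.Ioo (0:ℝ) (1/4) := by
    intro n
    have hn : (0:ℝ) ≤ n := Nat.cast_nonneg n
    constructor
    · positivity
    · rw [div_lt_div_iff₀ (by positivity) (by norm_num)]
      linarith
  have hεle : ∀ n : ℕ, (1 : ℝ)/((n:ℝ)+5) ≤ 1/5 := by
    intro n
    have hn : (0:ℝ) ≤ n := Nat.cast_nonneg n
    apply one_div_le_one_div_of_le <;> linarith
  have hseq : ∀ n : ℕ, ∃ z, z ∈ K ∧ μ {z} = 0 ∧ ∃ u,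
      ENNReal.ofReal (1 - 1/((n:ℝ)+5)) <
        μ {w : ℂ | |Real.log (‖w - z‖) - u| ≤ 1/((n:ℝ)+5)} := by
    intro n
    obtain ⟨z, hzK, hz0, u, hu⟩ := hcon (1/((n:ℝ)+5)) (1/((n:ℝ)+5)) (hεmem n) (hεmem n)
    exact ⟨z, hzK, hz0, u, hu⟩
  choose z hzK hz0 u hu using hseq
  set E : ℕ → Set ℂ :=
    fun n => {w : ℂ | |Real.log (‖w - z n‖) - u n| ≤ 1/((n:ℝ)+5)} with hEdef
  -- witness in the support
  have hwit : ∀ n, ∃ w, w ∈ E n ∧ w ∈ S := by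
    intro n
    by_contra hw
    push_neg at hw
    have hsub : E n ⊆ Sᶜ := fun w hwE => hw w hwE
    have h0 : μ (E n) = 0 := measure_mono_null hsub hSnull
    have := hu n
    rw [h0] at this
    simp at this
  -- bound on exp (u n)
  have hubd : ∀ n, Real.exp (u n) ≤ M * Real.exp 1 := by
    intro n
    obtain ⟨w, hwE, hwS⟩ := hwit n
    have habs : ‖w - z n‖ ≤ M := by
      have h1 := hM₁ w hwS
      have h2 := hM₂ (z n) (hzK n)
      have h3 := norm_sub_le w (z n)
      have := le_abs_self M₁
      have := le_abs_self M₂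
      simp only [hMdef]; linarith
    have hlog : Real.log (‖w - z n‖) ≤ Real.log M := by
      rcases le_or_gt (‖w - z n‖) 1 with h | h
      · exact (Real.log_nonpos (norm_nonneg _) h).trans (Real.log_nonneg hM1)
      · exact Real.log_le_log (by linarith) habs
    simp only [hEdef, Set.mem_setOf_eq] at hwE
    have hwE' := abs_le.mp hwE
    have hle : u n ≤ Real.log M + 1 := by
      have := hεle n
      linarith [hwE'.1]
    calc Real.exp (u n) ≤ Real.exp (Real.log M + 1) := Real.exp_le_exp.mpr hle
    _ = M * Real.exp 1 := by rw [Real.exp_add, Real.exp_log (by linarith)]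
  -- compactness: extract convergent subsequence of (z n, exp (u n))
  have hTcomp : IsCompact (K ×ˢ Set.Icc (0:ℝ) (M * Real.exp 1)) := hK.prod isCompact_Icc
  have hmem : ∀ n, (z n, Real.exp (u n)) ∈ K ×ˢ Set.Icc (0:ℝ) (M * Real.exp 1) :=
    fun n => ⟨hzK n, ⟨(Real.exp_pos _).le, hubd n⟩⟩
  obtain ⟨⟨zs, rs⟩, hlim_mem, φ, hφ, hφlim⟩ := hTcomp.tendsto_subseq hmem
  have hz_lim : Tendsto (fun k => z (φ k)) atTop (𝓝 zs) :=
    (continuous_fst.tendsto _).comp hφlim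
  have hr_lim : Tendsto (fun k => Real.exp (u (φ k))) atTop (𝓝 rs) :=
    (continuous_snd.tendsto _).comp hφlim
  have hd_lim : Tendsto (fun k => ‖z (φ k) - zs‖) atTop (𝓝 0) := by
    have h := tendsto_iff_dist_tendsto_zero.mp hz_lim
    simpa [Complex.dist_eq] using h
  have hφ_top : Tendsto (fun k => ((φ k : ℝ) + 5)) atTop atTop :=
    tendsto_atTop_add_const_right _ 5 (tendsto_natCast_atTop_atTop.comp hφ.tendsto_atTop)
  have hε_lim : Tendsto (fun k => (1:ℝ)/((φ k:ℝ)+5)) atTop (𝓝 0) := by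
    simpa [one_div, Function.comp_def] using tendsto_inv_atTop_zero.comp hφ_top
  -- each closed annulus around the circle of radius rs has full measure
  have hann : ∀ δ : ℝ, 0 < δ → μ {w : ℂ | |‖w - zs‖ - rs| ≤ δ} = 1 := by
    intro δ hδ
    set A := {w : ℂ | |‖w - zs‖ - rs| ≤ δ} with hAdef
    have hexp1 : Tendsto (fun k => Real.exp (1/((φ k:ℝ)+5))) atTop (𝓝 1) := by
      have := (Real.continuous_exp.tendsto 0).comp hε_lim
      simpa [Function.comp_def] using this
    have hexp2 : Tendsto (fun k => Real.exp (-(1/((φ k:ℝ)+5)))) atTop (𝓝 1) := by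
      have h0 : Tendsto (fun k => -((1:ℝ)/((φ k:ℝ)+5))) atTop (𝓝 0) := by
        simpa using hε_lim.neg
      have := (Real.continuous_exp.tendsto 0).comp h0
      simpa [Function.comp_def] using this
    have hup : Tendsto (fun k => Real.exp (u (φ k)) * Real.exp (1/((φ k:ℝ)+5))
        + ‖z (φ k) - zs‖) atTop (𝓝 rs) := by
      have := (hr_lim.mul hexp1).add hd_lim
      simpa using this
    have hlo : Tendsto (fun k => Real.exp (u (φ k)) * Real.exp (-(1/((φ k:ℝ)+5)))
        - ‖z (φ k) - zs‖) atTop (𝓝 rs) := by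
      have := (hr_lim.mul hexp2).sub hd_lim
      simpa using this
    have hev1 : ∀ᶠ k in atTop, Real.exp (u (φ k)) * Real.exp (1/((φ k:ℝ)+5))
        + ‖z (φ k) - zs‖ ≤ rs + δ :=
      hup.eventually_le_const (by linarith)
    have hev2 : ∀ᶠ k in atTop, rs - δ ≤ Real.exp (u (φ k)) * Real.exp (-(1/((φ k:ℝ)+5)))
        - ‖z (φ k) - zs‖ :=
      hlo.eventually_const_le (by linarith)
    have hμA : ∀ᶠ k in atTop, ENNReal.ofReal (1 - 1/((φ k:ℝ)+5)) ≤ μ A := by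
      filter_upwards [hev1, hev2] with k h1 h2
      have hsubE : (E (φ k)) \ {z (φ k)} ⊆ A := by
        intro w hw
        obtain ⟨hwE, hwz⟩ := hw
        have hne : w - z (φ k) ≠ 0 := sub_ne_zero.mpr (by simpa using hwz)
        have hpos : 0 < ‖w - z (φ k)‖ := norm_pos_iff.mpr hne
        simp only [hEdef, Set.mem_setOf_eq] at hwE
        have hwE' := abs_le.mp hwE
        have hle1 : ‖w - z (φ k)‖ ≤
            Real.exp (u (φ k)) * Real.exp (1/((φ k:ℝ)+5)) := by
          calc ‖w - z (φ k)‖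
              = Real.exp (Real.log (‖w - z (φ k)‖)) := (Real.exp_log hpos).symm
          _ ≤ Real.exp (u (φ k) + 1/((φ k:ℝ)+5)) := Real.exp_le_exp.mpr (by linarith [hwE'.2])
          _ = _ := Real.exp_add _ _
        have hge1 : Real.exp (u (φ k)) * Real.exp (-(1/((φ k:ℝ)+5))) ≤
            ‖w - z (φ k)‖ := by
          calc Real.exp (u (φ k)) * Real.exp (-(1/((φ k:ℝ)+5)))
              = Real.exp (u (φ k) + -(1/((φ k:ℝ)+5))) := (Real.exp_add _ _).symm
          _ ≤ Real.exp (Real.log (‖w - z (φ k)‖)) :=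
              Real.exp_le_exp.mpr (by linarith [hwE'.1])
          _ = ‖w - z (φ k)‖ := Real.exp_log hpos
        have ht1 : ‖w - zs‖ ≤
            ‖w - z (φ k)‖ + ‖z (φ k) - zs‖ := by
          have := norm_sub_le_norm_sub_add_norm_sub w (z (φ k)) zs
          simpa using this
        have ht2 : ‖w - z (φ k)‖ - ‖z (φ k) - zs‖ ≤
            ‖w - zs‖ := by
          have h3 := norm_sub_le_norm_sub_add_norm_sub w zs (z (φ k))
          have h4 : ‖zs - z (φ k)‖ = ‖z (φ k) - zs‖ := by
            exact norm_sub_rev _ _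
          rw [h4] at h3
          linarith
        show |‖w - zs‖ - rs| ≤ δ
        rw [abs_le]
        constructor <;> linarith
      calc ENNReal.ofReal (1 - 1/((φ k:ℝ)+5)) ≤ μ (E (φ k)) := (hu (φ k)).le
      _ = μ (E (φ k) \ {z (φ k)}) := (measure_diff_null (hz0 (φ k))).symm
      _ ≤ μ A := measure_mono hsubE
    have hone : Tendsto (fun k => ENNReal.ofReal (1 - 1/((φ k:ℝ)+5))) atTop (𝓝 1) := by
      have h1 : Tendsto (fun k => 1 - 1/((φ k:ℝ)+5)) atTop (𝓝 1) := by
        simpa using (tendsto_const_nhds (x := (1:ℝ)) (f := atTop)).sub hε_lim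
      have := (ENNReal.continuous_ofReal.tendsto 1).comp h1
      simpa [Function.comp_def] using this
    have h1le : (1:ENNReal) ≤ μ A := le_of_tendsto hone hμA
    exact le_antisymm prob_le_one h1le
  -- the circle has full measure, contradiction
  set Am : ℕ → Set ℂ := fun m => {w : ℂ | |‖w - zs‖ - rs| ≤ 1/((m:ℝ)+1)}
    with hAmdef
  have hAm : ∀ m : ℕ, μ (Am m) = 1 := fun m => hann _ (by positivity)
  have hInter : (⋂ m : ℕ, Am m) = {w : ℂ | ‖w - zs‖ = rs} := by
    ext w
    simp only [hAmdef, Set.mem_iInter, Set.mem_setOf_eq]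
    constructor
    · intro h
      by_contra hne
      have hpos : 0 < |‖w - zs‖ - rs| := abs_pos.mpr (sub_ne_zero.mpr hne)
      obtain ⟨m, hm⟩ := exists_nat_one_div_lt hpos
      exact absurd (h m) (not_le.mpr hm)
    · intro h m
      rw [h, sub_self, abs_zero]
      positivity
  have hmeas : ∀ m : ℕ, NullMeasurableSet (Am m) μ := by
    intro m
    refine (IsClosed.measurableSet ?_).nullMeasurableSet
    have hc : Continuous fun w : ℂ => |‖w - zs‖ - rs| :=
      (_root_.continuous_abs.comp
        ((continuous_norm.comp (continuous_id.sub continuous_const)).sub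
          continuous_const))
    exact isClosed_le hc continuous_const
  have hanti : Antitone Am := by
    intro a b hab w hw
    simp only [hAmdef, Set.mem_setOf_eq] at hw ⊢
    refine hw.trans (one_div_le_one_div_of_le (by positivity) ?_)
    have : (a:ℝ) ≤ b := Nat.cast_le.mpr hab
    linarith
  have hlim := tendsto_measure_iInter_atTop hmeas hanti ⟨0, by rw [hAm 0]; simp⟩
  rw [hInter] at hlim
  have hconst : Tendsto (μ ∘ Am) atTop (𝓝 (1:ENNReal)) := by
    have : (μ ∘ Am) = fun _ => (1:ENNReal) := funext fun m => hAm m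
    rw [this]
    exact tendsto_const_nhds
  have hcirc : μ {w : ℂ | ‖w - zs‖ = rs} = 1 :=
    tendsto_nhds_unique hlim hconst
  exact hnc zs hlim_mem.1 rs hlim_mem.2.1 hcirc
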